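/- Let Z₂ = ZMod 2 and U(1) = ℚ/ℤ, all actions trivial. The abelian group ⊕_{p=1}^{2} H^{2-p}(Z₂, H^p(Z₂, U(1))), where each inner cohomology group H^p(Z₂, U(1)) is regarded as a Z₂-module with trivial action, is isomorphic to ZMod 2. -/

import Mathlib

/-- `U(1)`, the circle group, presented additively as `ℚ/ℤ`. -/
abbrev U1 : Type := AddCircle (1 : ℚ)

/-- The group `ℤ₂`, written multiplicatively. -/
abbrev Z2 : Type := Multiplicative (ZMod 2)

open groupCohomology

section Aux

/-- Homs from `ZMod 2` to a group whose 2-torsion is `{0, a}` form a `ZMod 2`. -/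
lemma hom_zmod2_equiv {A : Type} [AddCommGroup A] (a : A) (ha : a + a = 0) (ha0 : a ≠ 0)
    (huniq : ∀ b : A, b + b = 0 → b = 0 ∨ b = a) :
    Nonempty ((ZMod 2 →+ A) ≃+ ZMod 2) := by
  have hext : ∀ f g : ZMod 2 →+ A, f 1 = g 1 → f = g := by
    intro f g h
    ext x
    have hall : ∀ z : ZMod 2, z = 0 ∨ z = 1 := by decide
    rcases hall x with rfl | rfl
    · simp
    · exact h
  have hφ2 : ((2 : ℤ) • a = 0) := by
    rw [two_zsmul]; exact ha
  set φ : ZMod 2 →+ A := ZMod.lift 2 ⟨zmultiplesHom A a, by simpa using hφ2⟩ with hφdef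
  have hφ1 : φ 1 = a := by
    have : ((1 : ℤ) : ZMod 2) = (1 : ZMod 2) := by push_cast; ring
    rw [hφdef, ← this, ZMod.lift_coe]
    simp
  have hΦ2 : (2 : ℤ) • φ = 0 := by
    ext x
    have h2x : x + x = 0 := by
      have : ∀ y : ZMod 2, y + y = 0 := by decide
      exact this x
    show (2 : ℤ) • φ x = 0
    rw [two_zsmul, ← map_add, h2x, map_zero]
  set Ψ : ZMod 2 →+ (ZMod 2 →+ A) :=
    ZMod.lift 2 ⟨zmultiplesHom _ φ, by simpa using hΦ2⟩ with hΨdef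
  have hΨ1 : Ψ 1 = φ := by
    have : ((1 : ℤ) : ZMod 2) = (1 : ZMod 2) := by push_cast; ring
    rw [hΨdef, ← this, ZMod.lift_coe]
    simp
  have hbij : Function.Bijective Ψ := by
    constructor
    · intro x y hxy
      have hx : ∀ z : ZMod 2, z = 0 ∨ z = 1 := by decide
      have key : Ψ 1 ≠ Ψ 0 := by
        rw [hΨ1, map_zero]
        intro h
        apply ha0
        rw [← hφ1, h]; rfl
      rcases hx x with rfl | rfl <;> rcases hx y with rfl | rfl
      · rfl
      · exact absurd hxy.symm key
      · exact absurd hxy key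
      · rfl
    · intro f
      have h2 : f 1 + f 1 = 0 := by
        rw [← map_add]
        have : (1 : ZMod 2) + 1 = 0 := by decide
        rw [this, map_zero]
      rcases huniq (f 1) h2 with h | h
      · exact ⟨0, by rw [map_zero]; exact hext 0 f (by simpa using h.symm)⟩
      · exact ⟨1, hext (Ψ 1) f (by rw [hΨ1, hφ1]; exact h.symm)⟩
  exact ⟨(AddEquiv.ofBijective Ψ hbij).symm⟩

/-- If `B ≃+ ZMod 2` then `(ZMod 2 →+ B) ≃+ ZMod 2`. -/
lemma hom_zmod2_equiv_of_equiv {B : Type} [AddCommGroup B] (e : B ≃+ ZMod 2) :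
    Nonempty ((ZMod 2 →+ B) ≃+ ZMod 2) := by
  refine hom_zmod2_equiv (e.symm 1) ?_ ?_ ?_
  · rw [← map_add]
    have : (1 : ZMod 2) + 1 = 0 := by decide
    rw [this, map_zero]
  · intro h
    have := e.symm.injective (h.trans (map_zero e.symm).symm)
    exact one_ne_zero this
  · intro b _
    have : e b = 0 ∨ e b = 1 := by
      have : ∀ z : ZMod 2, z = 0 ∨ z = 1 := by decide
      exact this (e b)
    rcases this with h | h
    · left; have := congrArg e.symm h; simpa using this
    · right; have := congrArg e.symm h; simpa using this

/-- The 2-torsion of `ℚ/ℤ` is `{0, 1/2}`, so `Hom(ZMod 2, U1) ≃+ ZMod 2`. -/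
lemma hom_zmod2_U1 : Nonempty ((ZMod 2 →+ U1) ≃+ ZMod 2) := by
  refine hom_zmod2_equiv (((1 : ℚ)/2 : ℚ) : U1) ?_ ?_ ?_
  · rw [← QuotientAddGroup.mk_add]
    have h12 : ((1:ℚ)/2 + (1:ℚ)/2 : ℚ) = 1 := by norm_num
    rw [h12]
    exact AddCircle.coe_period 1
  · intro h
    rw [AddCircle.coe_eq_zero_iff] at h
    obtain ⟨n, hn⟩ := h
    rw [zsmul_eq_mul, mul_one] at hn
    have : (2 : ℚ) * n = 1 := by rw [hn]; norm_num
    have h2 : (2 : ℤ) * n = 1 := by exact_mod_cast this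
    omega
  · intro b hb
    obtain ⟨q, rfl⟩ := QuotientAddGroup.mk_surjective b
    rw [← QuotientAddGroup.mk_add, AddCircle.coe_eq_zero_iff] at hb
    obtain ⟨n, hn⟩ := hb
    rw [zsmul_eq_mul, mul_one] at hn
    have hq : q = n / 2 := by linarith
    rcases Int.even_or_odd n with ⟨m, hm⟩ | ⟨m, hm⟩
    · left
      rw [AddCircle.coe_eq_zero_iff]
      exact ⟨m, by rw [zsmul_eq_mul, mul_one, hq, hm]; push_cast; ring⟩
    · right
      have : ((q : ℚ) : U1) - (((1:ℚ)/2 : ℚ) : U1) = 0 := by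
        rw [← QuotientAddGroup.mk_sub, AddCircle.coe_eq_zero_iff]
        exact ⟨m, by rw [zsmul_eq_mul, mul_one, hq, hm]; push_cast; ring⟩
      exact sub_eq_zero.mp this

end Aux

section Cohomology

/-- Every 2-cocycle of the trivial `Z2`-action on `U1` is a coboundary. -/
lemma twoCoboundaries_eq_top (f : cocycles₂ (Rep.trivial ℤ Z2 U1)) :
    ⇑f ∈ coboundaries₂ (Rep.trivial ℤ Z2 U1) := by
  obtain ⟨q, hq⟩ := QuotientAddGroup.mk_surjective
    (f (Multiplicative.ofAdd (1 : ZMod 2), Multiplicative.ofAdd (1 : ZMod 2)) + f (1, 1))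
  set y : U1 := ((q / 2 : ℚ) : U1) with hy
  have hyy : y + y = f (Multiplicative.ofAdd (1 : ZMod 2), Multiplicative.ofAdd (1 : ZMod 2))
      + f (1, 1) := by
    rw [hy, ← QuotientAddGroup.mk_add, ← hq]
    norm_num
  refine ⟨fun g => if g = 1 then f (1, 1) else y, funext fun gh => ?_⟩
  obtain ⟨g, h⟩ := gh
  change _ - _ + _ = f (g, h)
  have hρ : ∀ (g : Z2) (v : U1), (Rep.trivial ℤ Z2 U1).ρ g v = v := fun g v =>
    Representation.isTrivial_apply (Rep.trivial ℤ Z2 U1).ρ g v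
  rw [hρ]
  have hcase : ∀ g : Z2, g = 1 ∨ g = Multiplicative.ofAdd (1 : ZMod 2) := by decide
  have hne : (Multiplicative.ofAdd (1 : ZMod 2)) ≠ (1 : Z2) := by decide
  have hmul : Multiplicative.ofAdd (1 : ZMod 2) * Multiplicative.ofAdd (1 : ZMod 2)
      = (1 : Z2) := by decide
  have h1g : ∀ g : Z2, f (1, g) = f (1, 1) := fun g => cocycles₂_map_one_fst f g
  have hg1 : ∀ g : Z2, f (g, 1) = f (1, 1) := fun g => by
    have := cocycles₂_map_one_snd f g
    rwa [hρ] at this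
  rcases hcase g with rfl | rfl <;> rcases hcase h with rfl | rfl <;>
    simp only [one_mul, mul_one, hmul, reduceIte, if_neg hne, h1g, hg1] <;>
    try abel
  · rw [two_smul, hyy]; abel

/-- An isomorphism of `ℤ`-modules in `ModuleCat` gives an `AddEquiv` of carriers. -/
def modIsoAddEquiv {X Y : ModuleCat ℤ} (i : X ≅ Y) : X ≃+ Y where
  toFun := i.hom
  invFun := i.inv
  left_inv x := by
    exact i.hom_inv_id_apply x
  right_inv y := by
    exact i.inv_hom_id_apply y
  map_add' := map_add i.hom.hom

/-- `H²(Z2, U1)` vanishes. -/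
lemma H2_subsingleton : Subsingleton (groupCohomology (Rep.trivial ℤ Z2 U1) 2) := by
  have h1 : Subsingleton (H2 (Rep.trivial ℤ Z2 U1)) := by
    refine ⟨fun a b => ?_⟩
    have h0 : ∀ x : H2 (Rep.trivial ℤ Z2 U1), x = 0 := fun x =>
      H2_induction_on x (fun f => (H2π_eq_zero_iff f).2 (twoCoboundaries_eq_top f))
    rw [h0 a, h0 b]
  exact h1

/-- Precomposition with `Additive (Multiplicative (ZMod 2)) ≃+ ZMod 2`. -/
def homAdditiveEquiv (N : Type) [AddCommGroup N] : (Additive Z2 →+ N) ≃+ (ZMod 2 →+ N) :=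
  { AddEquiv.addMonoidHomCongrLeftEquiv (N := N) (AddEquiv.additiveMultiplicative (ZMod 2)) with
    map_add' := fun _ _ => by ext; rfl }

end Cohomology

/-- The classification `⊕_{p=1}^{2} H^{2-p}(ℤ₂, H^p(ℤ₂, U(1)))` of average SPT phases
for exact symmetry `K = ℤ₂` and average symmetry `G = ℤ₂` in spatial dimension `d = 1`
(all actions trivial) is `ℤ₂` (Table I of the paper; the disordered cluster chain). -/
theorem averageSPT_classification_Z2_Z2_1d :
    Nonempty (
      DirectSum (Fin 2) (fun p =>
        ↥(groupCohomology
            (Rep.trivial ℤ Z2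
              ↥(groupCohomology (Rep.trivial ℤ Z2 U1) (p.val + 1))) (2 - (p.val + 1))))
      ≃+ ZMod 2) := by
  classical
  set β := fun p : Fin 2 =>
    ↥(groupCohomology
        (Rep.trivial ℤ Z2
          ↥(groupCohomology (Rep.trivial ℤ Z2 U1) (p.val + 1))) (2 - (p.val + 1))) with hβ
  -- inner H¹(Z2, U1) ≃+ ZMod 2
  obtain ⟨eU⟩ := hom_zmod2_U1
  have e1 : ↥(groupCohomology (Rep.trivial ℤ Z2 U1) 1) ≃+ ZMod 2 :=
    (((modIsoAddEquiv (H1IsoOfIsTrivial (Rep.trivial ℤ Z2 U1))).trans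
      (homAdditiveEquiv U1)).trans eU)
  -- β 0 : H¹(Z2, H¹(Z2,U1)) ≃+ ZMod 2
  obtain ⟨eM⟩ := hom_zmod2_equiv_of_equiv e1
  have e0 : β 0 ≃+ ZMod 2 :=
    (((modIsoAddEquiv (H1IsoOfIsTrivial (Rep.trivial ℤ Z2
        ↥(groupCohomology (Rep.trivial ℤ Z2 U1) 1)))).trans
      (homAdditiveEquiv _)).trans eM)
  -- β 1 is subsingleton
  have hsub : Subsingleton (β 1) := by
    haveI hN : Subsingleton ↥(groupCohomology (Rep.trivial ℤ Z2 U1) 2) := H2_subsingleton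
    haveI hN' : Subsingleton
        ↥(Rep.trivial ℤ Z2 ↑(groupCohomology (Rep.trivial ℤ Z2 U1) 2)) := hN
    haveI : Subsingleton
        (Rep.trivial ℤ Z2 ↥(groupCohomology (Rep.trivial ℤ Z2 U1) 2)).ρ.invariants := by
      infer_instance
    haveI : Subsingleton (ModuleCat.of ℤ
        (Rep.trivial ℤ Z2 ↥(groupCohomology (Rep.trivial ℤ Z2 U1) 2)).ρ.invariants) := this
    exact Equiv.subsingleton (modIsoAddEquiv (H0Iso (Rep.trivial ℤ Z2
      ↥(groupCohomology (Rep.trivial ℤ Z2 U1) 2)))).toEquiv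
  -- Assemble
  let comp : ∀ i : Fin 2, β i →+ ZMod 2 := fun i =>
    Fin.cases e0.toAddMonoidHom (fun _ => 0) i
  let E : DirectSum (Fin 2) β →+ ZMod 2 := DirectSum.toAddMonoid comp
  let J : ZMod 2 →+ DirectSum (Fin 2) β :=
    (DirectSum.of β 0).comp e0.symm.toAddMonoidHom
  have hEJ : ∀ c, E (J c) = c := by
    intro c
    show E (DirectSum.of β 0 (e0.symm c)) = c
    rw [DirectSum.toAddMonoid_of]
    show e0 (e0.symm c) = c
    exact e0.apply_symm_apply c
  have hJE : J.comp E = AddMonoidHom.id _ := by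
    refine DirectSum.addHom_ext (fun i x => ?_)
    match i with
    | 0 =>
      show J (E (DirectSum.of β 0 x)) = DirectSum.of β 0 x
      rw [DirectSum.toAddMonoid_of]
      show DirectSum.of β 0 (e0.symm (e0 x)) = DirectSum.of β 0 x
      rw [e0.symm_apply_apply]
    | 1 =>
      show J (E (DirectSum.of β 1 x)) = DirectSum.of β 1 x
      have hx : x = 0 := @Subsingleton.elim _ hsub x 0
      subst hx
      simp
  refine ⟨{ toFun := E, invFun := J, left_inv := ?_, right_inv := hEJ,
            map_add' := E.map_add }⟩
  intro x
  exact DFunLike.congr_fun hJE x
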